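/- Let k be a field, m ≥ 1, r₁,…,r_m > 1 integers, and f(Z,T) ∈ k[Z,T] a line (i.e., k[Z,T]/(f) ≅ k[X]). Let A = k[X₁,…,X_m,Y,Z,T]/(X₁^{r₁}⋯X_m^{r_m}·Y − f(Z,T)). Then the polynomial ring A[W] in one variable over A is k-isomorphic to the polynomial ring in m+3 variables over k. -/

import Mathlib

open MvPolynomial

section Aux

lemma asanuma_aux_prime_X {k : Type*} [Field k] {σ : Type*} [DecidableEq σ] (s : σ) :
    Prime (X s : MvPolynomial σ k) := by
  classical
  let e : Option {t : σ // t ≠ s} ≃ σ :=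
    { toFun := fun o => o.elim s Subtype.val
      invFun := fun t => if h : t = s then none else some ⟨t, h⟩
      left_inv := by
        rintro (_ | ⟨t, ht⟩)
        · simp
        · simp [ht]
      right_inv := by
        intro t
        by_cases h : t = s <;> simp [h] }
  let ε := (renameEquiv k e.symm).trans (optionEquivLeft k {t : σ // t ≠ s})
  rw [← MulEquiv.prime_iff ε.toMulEquiv]
  have h1 : e.symm s = none := by
    rw [Equiv.symm_apply_eq]; rfl
  have h2 : ε (X s) = Polynomial.X := by
    simp only [ε, AlgEquiv.trans_apply, renameEquiv_apply, rename_X, h1, optionEquivLeft_X_none]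
  rw [show (ε.toMulEquiv (X s) : Polynomial (MvPolynomial {t : σ // t ≠ s} k)) = ε (X s) from rfl,
    h2]
  exact Polynomial.prime_X

lemma asanuma_aux_comp_aeval {k D : Type*} [CommSemiring k] [CommSemiring D] [Algebra k D]
    {n : ℕ} (d : Fin n → Polynomial k) (b : D) (w : MvPolynomial (Fin n) k) :
    MvPolynomial.aeval (fun i => Polynomial.aeval b (d i)) w
      = Polynomial.aeval b (MvPolynomial.aeval d w) := by
  have := MvPolynomial.comp_aeval (f := d) (φ := Polynomial.aeval b (R := k))
  exact (congrFun (congrArg DFunLike.coe this) w).symm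

lemma asanuma_aux_line_ne_zero {k : Type*} [Field k] (f : MvPolynomial (Fin 2) k)
    (hline : Nonempty ((MvPolynomial (Fin 2) k ⧸ Ideal.span {f}) ≃ₐ[k] Polynomial k)) :
    f ≠ 0 := by
  rintro rfl
  obtain ⟨ε⟩ := hline
  set I : Ideal (MvPolynomial (Fin 2) k) := Ideal.span {(0 : MvPolynomial (Fin 2) k)} with hI
  have hIbot : I = ⊥ := by simp [hI]
  let α : MvPolynomial (Fin 2) k →ₐ[k] Polynomial k :=
    ε.toAlgHom.comp (Ideal.Quotient.mkₐ k I)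
  have hαinj : Function.Injective α := by
    intro a b hab
    have : Ideal.Quotient.mk I a = Ideal.Quotient.mk I b := ε.injective hab
    have := Ideal.Quotient.eq.mp this
    rw [hIbot] at this
    simpa [sub_eq_zero] using this
  have hαsurj : Function.Surjective α := by
    intro y
    obtain ⟨q, hq⟩ := ε.surjective y
    obtain ⟨p, hp⟩ := Ideal.Quotient.mk_surjective (I := I) q
    exact ⟨p, by simp [α, hp, hq]⟩
  obtain ⟨p, hp⟩ := hαsurj Polynomial.X
  have key : ∀ i : Fin 2, X i = Polynomial.aeval p (α (X i)) := by
    intro i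
    apply hαinj
    rw [← Polynomial.aeval_algHom_apply, hp, Polynomial.aeval_X_left_apply]
  have chain : ∀ (i j : Fin 2),
      pderiv i (X j : MvPolynomial (Fin 2) k)
        = Polynomial.aeval p (Polynomial.derivative (α (X j))) * pderiv i p := by
    intro i j
    conv_lhs => rw [key j]
    rw [Derivation.map_aeval]
    simp [smul_eq_mul]
  have h00 := chain 0 0
  have h10 := chain 1 0
  have h01 := chain 0 1
  have h11 := chain 1 1
  rw [pderiv_X_self] at h00 h11
  rw [pderiv_X_of_ne (by decide)] at h10 h01
  set u0 := Polynomial.aeval p (Polynomial.derivative (α (X 0)))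
  set u1 := Polynomial.aeval p (Polynomial.derivative (α (X 1)))
  have hd0 : pderiv (0 : Fin 2) p ≠ 0 := by
    intro hz
    rw [hz, mul_zero] at h00
    exact one_ne_zero h00
  have hu1 : u1 = 0 := by
    rcases mul_eq_zero.mp h01.symm with h | h
    · exact h
    · exact absurd h hd0
  rw [hu1, zero_mul] at h11
  exact one_ne_zero h11

end Aux

set_option maxHeartbeats 1000000 in
set_option synthInstance.maxHeartbeats 400000 in
open MvPolynomial in
theorem asanuma_main
    {k : Type*} [Field k] (m : ℕ) (r : Fin m → ℕ) (hr : ∀ j, 0 < r j)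
    (f : MvPolynomial (Fin 2) k) (hf0 : f ≠ 0)
    (ε : (MvPolynomial (Fin 2) k ⧸ Ideal.span {f}) ≃ₐ[k] Polynomial k) :
    Nonempty (Polynomial
        (MvPolynomial (Fin m ⊕ Fin 3) k ⧸
          Ideal.span {(∏ j : Fin m, X (Sum.inl j) ^ r j) * X (Sum.inr 0)
            - rename (fun i : Fin 2 => (Sum.inr i.succ : Fin m ⊕ Fin 3)) f})
      ≃ₐ[k] MvPolynomial (Fin (m + 3)) k) := by
  classical
  set e : Fin 2 → Fin m ⊕ Fin 3 := fun i => Sum.inr i.succ with he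
  set xmon : MvPolynomial (Fin m ⊕ Fin 3) k := ∏ j : Fin m, X (Sum.inl j) ^ r j with hxmon
  set g : MvPolynomial (Fin m ⊕ Fin 3) k := xmon * X (Sum.inr 0) - rename e f with hg
  set I : Ideal (MvPolynomial (Fin m ⊕ Fin 3) k) := Ideal.span {g} with hI

  set mk : MvPolynomial (Fin m ⊕ Fin 3) k →ₐ[k]
      (MvPolynomial (Fin m ⊕ Fin 3) k ⧸ I) := Ideal.Quotient.mkₐ k I with hmk
  -- the algebra map k[Z,T] → k[u]
  set α : MvPolynomial (Fin 2) k →ₐ[k] Polynomial k :=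
    ε.toAlgHom.comp (Ideal.Quotient.mkₐ k (Ideal.span {f})) with hα
  have hα0 : ∀ w ∈ Ideal.span {f}, α w = 0 := by
    intro w hw
    have : Ideal.Quotient.mk (Ideal.span {f}) w = 0 := Ideal.Quotient.eq_zero_iff_mem.mpr hw
    simp [hα, Ideal.Quotient.mkₐ_eq_mk, this]
  have hαmem : ∀ w, α w = 0 → w ∈ Ideal.span {f} := by
    intro w hw
    have h1 : ε (Ideal.Quotient.mk (Ideal.span {f}) w) = 0 := by
      simpa [hα, Ideal.Quotient.mkₐ_eq_mk] using hw
    have h2 : Ideal.Quotient.mk (Ideal.span {f}) w = 0 := by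
      apply ε.injective; rw [map_zero]; exact h1
    exact Ideal.Quotient.eq_zero_iff_mem.mp h2
  have hαsurj : Function.Surjective α := by
    intro y
    obtain ⟨qq, hqq⟩ := ε.surjective y
    obtain ⟨pp, hpp⟩ := Ideal.Quotient.mk_surjective (I := Ideal.span {f}) qq
    exact ⟨pp, by simp [hα, Ideal.Quotient.mkₐ_eq_mk, hpp, hqq]⟩
  obtain ⟨h, hh⟩ := hαsurj Polynomial.X
  set d : Fin 2 → Polynomial k := fun i => α (X i) with hd
  have hαd : (α : MvPolynomial (Fin 2) k →ₐ[k] Polynomial k) = MvPolynomial.aeval d :=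
    MvPolynomial.algHom_ext fun i => by simp [hd]

  -- B-side elements
  set Yb : Polynomial (MvPolynomial (Fin m ⊕ Fin 3) k ⧸ I) :=
    Polynomial.C (mk (X (Sum.inr 0))) with hYb
  set xb : Polynomial (MvPolynomial (Fin m ⊕ Fin 3) k ⧸ I) :=
    Polynomial.C (mk xmon) with hxb
  set hb : Polynomial (MvPolynomial (Fin m ⊕ Fin 3) k ⧸ I) :=
    Polynomial.C (mk (rename e h)) with hhb
  set Vb : Polynomial (MvPolynomial (Fin m ⊕ Fin 3) k ⧸ I) :=
    hb + xb * Polynomial.X with hVb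
  set Zb : Fin 2 → Polynomial (MvPolynomial (Fin m ⊕ Fin 3) k ⧸ I) :=
    fun i => Polynomial.C (mk (X (e i))) with hZb
  set θ : MvPolynomial (Fin 2) k →ₐ[k] Polynomial (MvPolynomial (Fin m ⊕ Fin 3) k ⧸ I) :=
    Polynomial.CAlgHom.comp (mk.comp (rename e)) with hθ
  have hθX : ∀ i, θ (X i) = Zb i := by
    intro i
    simp [hθ, hZb, Polynomial.CAlgHom]
  have hθh : θ h = hb := by simp [hθ, hhb, Polynomial.CAlgHom]
  have hgmem : g ∈ I := by rw [hI]; exact Ideal.subset_span rfl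
  have hθf : θ f = xb * Yb := by
    have h1 : mk (rename e f) = mk (xmon * X (Sum.inr 0)) := by
      rw [hmk]
      simp only [Ideal.Quotient.mkₐ_eq_mk]
      rw [Ideal.Quotient.eq]
      have : rename e f - xmon * X (Sum.inr 0) = -g := by rw [hg]; ring
      rw [this]
      exact neg_mem hgmem
    simp only [hθ, AlgHom.coe_comp, Function.comp_apply, Polynomial.CAlgHom]
    rw [show ((mk : MvPolynomial (Fin m ⊕ Fin 3) k →ₐ[k] _) (rename e f)) = mk (rename e f)
      from rfl] at *
    simp only [h1, map_mul, hxb, hYb]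
    simp

  -- witnesses G i  : X i - h*(d i) = f * G i
  have hGex : ∀ i : Fin 2, ∃ G, (X i : MvPolynomial (Fin 2) k)
      - Polynomial.aeval h (d i) = f * G := by
    intro i
    have hmem : (X i : MvPolynomial (Fin 2) k) - Polynomial.aeval h (d i)
        ∈ Ideal.span {f} := by
      apply hαmem
      rw [map_sub, ← Polynomial.aeval_algHom_apply, hh, Polynomial.aeval_X_left_apply]
      simp [hd]
    rw [Ideal.mem_span_singleton'] at hmem
    obtain ⟨G, hG⟩ := hmem
    exact ⟨G, by rw [← hG]; ring⟩
  choose G hG using hGex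
  -- witnesses c i : aeval hb (d i) - aeval Vb (d i) = (hb - Vb) * c i
  have hcex : ∀ i : Fin 2, ∃ c, Polynomial.aeval hb (d i) - Polynomial.aeval Vb (d i)
      = (hb - Vb) * c := by
    intro i
    have hdvd := Polynomial.sub_dvd_eval_sub hb Vb
      ((d i).map (algebraMap k (Polynomial (MvPolynomial (Fin m ⊕ Fin 3) k ⧸ I))))
    rw [Polynomial.eval_map, Polynomial.eval_map] at hdvd
    obtain ⟨c, hc⟩ := hdvd
    exact ⟨c, by rw [Polynomial.aeval_def, Polynomial.aeval_def]; exact hc⟩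
  choose c hc using hcex
  set Z1 : Fin 2 → Polynomial (MvPolynomial (Fin m ⊕ Fin 3) k ⧸ I) :=
    fun i => Yb * θ (G i) - Polynomial.X * c i with hZ1
  have hIdentB : ∀ i, Zb i - Polynomial.aeval Vb (d i) = xb * Z1 i := by
    intro i
    have h1 : Zb i - Polynomial.aeval hb (d i) = xb * Yb * θ (G i) := by
      have h2 := congrArg θ (hG i)
      rw [map_sub, map_mul, hθX, hθf, ← Polynomial.aeval_algHom_apply, hθh] at h2
      exact h2
    have h2 := hc i
    have h3 : hb - Vb = -(xb * Polynomial.X) := by rw [hVb]; ring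
    rw [h3] at h2
    rw [hZ1]
    linear_combination h1 + h2

  -- the map φ : k[(m+3) vars] → A[W]
  set v : Fin m ⊕ Fin 3 → Polynomial (MvPolynomial (Fin m ⊕ Fin 3) k ⧸ I) :=
    Sum.elim (fun j => Polynomial.C (mk (X (Sum.inl j)))) (Fin.cases Vb Z1) with hv
  set φ : MvPolynomial (Fin (m + 3)) k →ₐ[k] Polynomial (MvPolynomial (Fin m ⊕ Fin 3) k ⧸ I) :=
    MvPolynomial.aeval (fun i => v (finSumFinEquiv.symm i)) with hφ
  have hφX : ∀ s, φ (X (finSumFinEquiv s)) = v s := by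
    intro s
    simp [hφ]
  -- C-side elements
  set Xc : Fin m ⊕ Fin 3 → MvPolynomial (Fin (m + 3)) k :=
    fun s => X (finSumFinEquiv s) with hXc
  set xc : MvPolynomial (Fin (m + 3)) k := ∏ j : Fin m, Xc (Sum.inl j) ^ r j with hxc
  set Vc : MvPolynomial (Fin (m + 3)) k := Xc (Sum.inr 0) with hVc
  set Z1c : Fin 2 → MvPolynomial (Fin (m + 3)) k := fun i => Xc (Sum.inr i.succ) with hZ1c
  set Wc : Fin 2 → MvPolynomial (Fin (m + 3)) k :=
    fun i => Polynomial.aeval Vc (d i) + xc * Z1c i with hWc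
  have hxcne : xc ≠ 0 := by
    rw [hxc]
    apply Finset.prod_ne_zero_iff.mpr
    intro j _
    exact pow_ne_zero _ (MvPolynomial.X_ne_zero _)
  -- key congruence lemma in C
  have hkey : ∀ w : MvPolynomial (Fin 2) k,
      ∃ t, MvPolynomial.aeval Wc w = Polynomial.aeval Vc (α w) + xc * t := by
    intro w
    have hmem : MvPolynomial.aeval Wc w - Polynomial.aeval Vc (α w)
        ∈ Ideal.span {xc} := by
      rw [← Ideal.Quotient.eq_zero_iff_mem, map_sub, sub_eq_zero]
      set μ : MvPolynomial (Fin (m + 3)) k →ₐ[k]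
          (MvPolynomial (Fin (m + 3)) k ⧸ Ideal.span {xc}) :=
        Ideal.Quotient.mkₐ k (Ideal.span {xc}) with hμ
      have hxc0 : μ xc = 0 := by
        rw [hμ]
        simp only [Ideal.Quotient.mkₐ_eq_mk]
        exact Ideal.Quotient.eq_zero_iff_mem.mpr (Ideal.subset_span rfl)
      have hμW : ∀ i, μ (Wc i) = Polynomial.aeval (μ Vc) (d i) := by
        intro i
        rw [hWc]
        simp only [map_add, map_mul, hxc0, zero_mul, add_zero]
        rw [← Polynomial.aeval_algHom_apply]
      calc (Ideal.Quotient.mk (Ideal.span {xc})) (MvPolynomial.aeval Wc w)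
          = μ (MvPolynomial.aeval Wc w) := rfl
        _ = MvPolynomial.aeval (fun i => μ (Wc i)) w := by
            rw [MvPolynomial.comp_aeval_apply]
        _ = MvPolynomial.aeval (fun i => Polynomial.aeval (μ Vc) (d i)) w := by
            simp only [hμW]
        _ = Polynomial.aeval (μ Vc) (MvPolynomial.aeval d w) :=
            asanuma_aux_comp_aeval d (μ Vc) w
        _ = μ (Polynomial.aeval Vc (MvPolynomial.aeval d w)) := by
            rw [Polynomial.aeval_algHom_apply]
        _ = (Ideal.Quotient.mk (Ideal.span {xc})) (Polynomial.aeval Vc (α w)) := by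
            rw [hαd]; rfl
    rw [Ideal.mem_span_singleton'] at hmem
    obtain ⟨t, ht⟩ := hmem
    exact ⟨t, by linear_combination -ht⟩
  obtain ⟨q, hq⟩ := hkey f
  rw [hα0 f (Ideal.subset_span rfl), map_zero, zero_add] at hq
  obtain ⟨p, hp⟩ := hkey h
  rw [hh, Polynomial.aeval_X] at hp

  -- the map ψ : A[W] → k[(m+3) vars]
  set wv : Fin m ⊕ Fin 3 → MvPolynomial (Fin (m + 3)) k :=
    Sum.elim (fun j => Xc (Sum.inl j)) (Fin.cases q Wc) with hwv
  set ψP : MvPolynomial (Fin m ⊕ Fin 3) k →ₐ[k] MvPolynomial (Fin (m + 3)) k :=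
    MvPolynomial.aeval wv with hψP
  have hwvE : ∀ i : Fin 2, wv (e i) = Wc i := by
    intro i
    rw [hwv, he]
    simp
  have hψPg : ψP g = 0 := by
    rw [hψP, hg, map_sub, map_mul]
    rw [aeval_rename]
    rw [show (wv ∘ e) = Wc from funext hwvE, hq]
    rw [hxmon, map_prod]
    simp only [map_pow, aeval_X]
    rw [show wv (Sum.inr 0) = q from by rw [hwv]; simp]
    rw [show (∏ j : Fin m, wv (Sum.inl j) ^ r j) = xc from by
      rw [hxc]; exact Finset.prod_congr rfl fun j _ => by rw [hwv]; simp]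
    ring
  set ψA : (MvPolynomial (Fin m ⊕ Fin 3) k ⧸ I) →ₐ[k] MvPolynomial (Fin (m + 3)) k :=
    Ideal.Quotient.liftₐ I ψP (by
      intro a ha
      rw [hI, Ideal.mem_span_singleton'] at ha
      obtain ⟨b, rfl⟩ := ha
      rw [map_mul, hψPg, mul_zero]) with hψA
  set ψ : Polynomial (MvPolynomial (Fin m ⊕ Fin 3) k ⧸ I) →ₐ[k] MvPolynomial (Fin (m + 3)) k :=
    Polynomial.aevalTower ψA (-p) with hψ
  have hψC : ∀ t : MvPolynomial (Fin m ⊕ Fin 3) k, ψ (Polynomial.C (mk t)) = ψP t := by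
    intro t
    rw [hψ, Polynomial.aevalTower_C, hψA, hmk]
    rw [Ideal.Quotient.mkₐ_eq_mk, Ideal.Quotient.liftₐ_apply]
    rfl
  have hψX : ψ Polynomial.X = -p := Polynomial.aevalTower_X _ _
  have hψxb : ψ xb = xc := by
    rw [hxb, hψC, hψP, hxmon, map_prod, hxc]
    exact Finset.prod_congr rfl fun j _ => by rw [map_pow, aeval_X, hwv]; simp
  have hψhb : ψ hb = Vc + xc * p := by
    rw [hhb, hψC, hψP]
    rw [aeval_rename]
    rw [show (wv ∘ e) = Wc from funext hwvE, hp]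
  have hψVb : ψ Vb = Vc := by
    rw [hVb, map_add, map_mul, hψhb, hψxb, hψX]
    ring
  have hψZb : ∀ i, ψ (Zb i) = Wc i := by
    intro i
    rw [hZb]
    simp only []
    rw [hψC, hψP]
    rw [show ((MvPolynomial.aeval wv) (X (e i))) = wv (e i) from aeval_X _ _, hwvE]
  have hψZ1 : ∀ i, ψ (Z1 i) = Z1c i := by
    intro i
    have h1 := congrArg ψ (hIdentB i)
    rw [map_sub, map_mul, hψxb, hψZb, ← Polynomial.aeval_algHom_apply, hψVb] at h1
    have h2 : Wc i - Polynomial.aeval Vc (d i) = xc * Z1c i := by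
      rw [hWc]; ring
    exact (mul_left_cancel₀ hxcne (h2.symm.trans h1)).symm

  -- regularity of xmon modulo I
  have hnd : ∀ j : Fin m, ¬ (X (Sum.inl j) : MvPolynomial (Fin m ⊕ Fin 3) k) ∣ g := by
    intro j hdvd
    obtain ⟨b, hb⟩ := hdvd
    set τ : MvPolynomial (Fin m ⊕ Fin 3) k →ₐ[k] MvPolynomial (Fin m ⊕ Fin 3) k :=
      MvPolynomial.aeval (fun s => if s = Sum.inl j then 0 else X s) with hτ
    have hτX : τ (X (Sum.inl j)) = 0 := by
      rw [hτ, aeval_X, if_pos rfl]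
    have hτg0 : τ g = 0 := by
      rw [hb, map_mul, hτX, zero_mul]
    have hτxmon : τ xmon = 0 := by
      rw [hxmon, map_prod]
      apply Finset.prod_eq_zero (Finset.mem_univ j)
      rw [map_pow, hτX]
      exact zero_pow (Nat.pos_iff_ne_zero.mp (hr j))
    have hτren : τ (rename e f) = rename e f := by
      rw [hτ, aeval_rename]
      have hcomp : ((fun s => if s = Sum.inl j then (0 : MvPolynomial (Fin m ⊕ Fin 3) k)
          else X s) ∘ e) = X ∘ e := by
        funext i
        simp [he]
      rw [hcomp]
      have h2 := aeval_rename (R := k) (g := (X : Fin m ⊕ Fin 3 → MvPolynomial (Fin m ⊕ Fin 3) k))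
        (k := e) (p := f)
      rw [aeval_X_left_apply] at h2
      exact h2.symm
    have hren0 : rename e f = 0 := by
      have h2 : τ g = -(rename e f) := by
        rw [hg, map_sub, map_mul, hτxmon, zero_mul, hτren, zero_sub]
      rw [hτg0] at h2
      exact (neg_eq_zero.mp h2.symm)
    have hfe : Function.Injective e := by
      intro a b hab
      rw [he] at hab
      simpa [Fin.succ_inj] using hab
    apply hf0
    have hinj := MvPolynomial.rename_injective (R := k) e hfe
    apply hinj
    rw [hren0, map_zero]

  have hrel : IsRelPrime g xmon := by
    rw [hxmon]
    apply IsRelPrime.prod_right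
    intro j _
    apply IsRelPrime.pow_right
    exact (((asanuma_aux_prime_X (Sum.inl j)).irreducible.isRelPrime_iff_not_dvd).mpr
      (hnd j)).symm
  have hregA : ∀ u : MvPolynomial (Fin m ⊕ Fin 3) k ⧸ I, mk xmon * u = 0 → u = 0 := by
    intro u hu
    obtain ⟨U, rfl⟩ := Ideal.Quotient.mk_surjective (I := I) u
    have h1 : (mk xmon) * (Ideal.Quotient.mk I U) = Ideal.Quotient.mk I (xmon * U) := by
      rw [hmk, Ideal.Quotient.mkₐ_eq_mk, map_mul]
    rw [h1] at hu
    have h2 : xmon * U ∈ I := Ideal.Quotient.eq_zero_iff_mem.mp hu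
    rw [hI, Ideal.mem_span_singleton] at h2
    have h3 : g ∣ U := hrel.dvd_of_dvd_mul_left h2
    exact Ideal.Quotient.eq_zero_iff_mem.mpr (by rw [hI, Ideal.mem_span_singleton]; exact h3)
  have hregB : ∀ b : Polynomial (MvPolynomial (Fin m ⊕ Fin 3) k ⧸ I), xb * b = 0 → b = 0 := by
    intro b hbz
    ext n
    have h1 : mk xmon * b.coeff n = 0 := by
      have := congrArg (fun q => Polynomial.coeff q n) hbz
      simpa [hxb, Polynomial.coeff_C_mul] using this
    simpa using hregA _ h1
  have hcancel : ∀ b1 b2 : Polynomial (MvPolynomial (Fin m ⊕ Fin 3) k ⧸ I),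
      xb * b1 = xb * b2 → b1 = b2 := by
    intro b1 b2 hb12
    have := hregB (b1 - b2) (by rw [mul_sub, hb12, sub_self])
    linear_combination this

  -- φ-side computations
  have hφXc : ∀ s, φ (Xc s) = v s := by
    intro s
    simp only [hXc]
    exact hφX s
  have hφVc : φ Vc = Vb := by
    rw [hVc, hφXc, hv]
    simp
  have hφZ1c : ∀ i, φ (Z1c i) = Z1 i := by
    intro i
    simp only [hZ1c]
    rw [hφXc, hv]
    simp
  have hφxc : φ xc = xb := by
    rw [hxc, map_prod]
    have h1 : xb = ∏ j : Fin m, Polynomial.C (mk (X (Sum.inl j))) ^ r j := by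
      simp only [hxb, hxmon, map_prod, map_pow]
    rw [h1]
    apply Finset.prod_congr rfl
    intro j _
    rw [map_pow, hφXc, hv]
    simp
  have hφWc : ∀ i, φ (Wc i) = Zb i := by
    intro i
    simp only [hWc]
    rw [map_add, map_mul, ← Polynomial.aeval_algHom_apply, hφVc, hφxc, hφZ1c]
    linear_combination -(hIdentB i)
  have haevalZb : ∀ w' : MvPolynomial (Fin 2) k, MvPolynomial.aeval Zb w' = θ w' := by
    intro w'
    have h1 : (MvPolynomial.aeval Zb : MvPolynomial (Fin 2) k →ₐ[k] _) = θ :=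
      MvPolynomial.algHom_ext fun i => by rw [aeval_X, hθX]
    rw [← h1]
  have hφaevalWc : ∀ w' : MvPolynomial (Fin 2) k, φ (MvPolynomial.aeval Wc w') = θ w' := by
    intro w'
    rw [← AlgHom.comp_apply, show φ.comp (MvPolynomial.aeval Wc) = MvPolynomial.aeval (fun i => φ (Wc i)) from
      MvPolynomial.algHom_ext fun i => by rw [AlgHom.comp_apply, aeval_X, aeval_X]]
    rw [show (fun i => φ (Wc i)) = Zb from funext hφWc]
    exact haevalZb w'
  have hφq : φ q = Yb := by
    apply hcancel
    have h1 := congrArg φ hq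
    rw [hφaevalWc, hθf, map_mul, hφxc] at h1
    exact h1.symm
  have hφp : φ p = -Polynomial.X := by
    have h1 := congrArg φ hp
    rw [hφaevalWc, hθh, map_add, map_mul, hφxc, hφVc] at h1
    have h2 : xb * (φ p + Polynomial.X) = 0 := by
      rw [hVb] at h1
      linear_combination -h1
    have h3 := hregB _ h2
    linear_combination h3
  -- the two compositions
  have comp1 : ψ.comp φ = AlgHom.id k (MvPolynomial (Fin (m + 3)) k) := by
    apply MvPolynomial.algHom_ext
    intro i
    obtain ⟨s, rfl⟩ := finSumFinEquiv.surjective i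
    rw [AlgHom.comp_apply, hφX, AlgHom.id_apply]
    cases s with
    | inl j =>
      rw [hv]
      simp only [Sum.elim_inl]
      rw [hψC, hψP, aeval_X, hwv]
      simp [hXc]
    | inr i3 =>
      refine Fin.cases ?_ ?_ i3
      · rw [hv]
        simp only [Sum.elim_inr, Fin.cases_zero]
        rw [hψVb, hVc, hXc]
      · intro i2
        rw [hv]
        simp only [Sum.elim_inr, Fin.cases_succ]
        rw [hψZ1, hZ1c, hXc]
  have comp2 : φ.comp ψ
      = AlgHom.id k (Polynomial (MvPolynomial (Fin m ⊕ Fin 3) k ⧸ I)) := by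
    apply Polynomial.algHom_ext'
    · apply Ideal.Quotient.algHom_ext
      apply MvPolynomial.algHom_ext
      intro s
      simp only [AlgHom.comp_apply]
      have hCmk : ∀ t : MvPolynomial (Fin m ⊕ Fin 3) k,
          (Polynomial.CAlgHom (R := k)) ((Ideal.Quotient.mkₐ k I) (X s)) = Polynomial.C (mk (X s)) := by
        intro t
        rw [hmk]
        rfl
      rw [hCmk (X s)]
      rw [hψC, hψP, aeval_X]
      cases s with
      | inl j =>
        rw [hwv]
        simp only [Sum.elim_inl]
        rw [hXc, hφX, hv]
        simp
      | inr i3 =>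
        refine Fin.cases ?_ ?_ i3
        · rw [hwv]
          simp only [Sum.elim_inr, Fin.cases_zero]
          rw [hφq, hYb]
          rfl
        · intro i2
          rw [hwv]
          simp only [Sum.elim_inr, Fin.cases_succ]
          rw [hφWc, hZb]
          simp [he]
    · simp only [AlgHom.comp_apply, AlgHom.id_apply]
      rw [hψX, map_neg, hφp, neg_neg]
  exact ⟨AlgEquiv.ofAlgHom ψ φ comp1 comp2⟩

open MvPolynomial in
/-- If `f` is a line in `k[Z,T]`, then for
`A = k[X₁,…,X_m,Y,Z,T]/(X₁^{r₁}⋯X_m^{r_m}·Y − f(Z,T))` with each `rᵢ > 1`,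
the ring `A[W]` is a polynomial ring in `m+3` variables over `k`. -/
theorem asanuma_ring_stably_polynomial
    {k : Type*} [Field k] (m : ℕ) (hm : 1 ≤ m) (r : Fin m → ℕ) (hr : ∀ j, 1 < r j)
    (f : MvPolynomial (Fin 2) k)
    (hline : Nonempty ((MvPolynomial (Fin 2) k ⧸ Ideal.span {f}) ≃ₐ[k] Polynomial k)) :
    Nonempty (Polynomial
        (MvPolynomial (Fin m ⊕ Fin 3) k ⧸
          Ideal.span {(∏ j : Fin m, X (Sum.inl j) ^ r j) * X (Sum.inr 0)
            - rename (fun i : Fin 2 => (Sum.inr i.succ : Fin m ⊕ Fin 3)) f})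
      ≃ₐ[k] MvPolynomial (Fin (m + 3)) k) := by
  obtain ⟨ε⟩ := hline
  exact asanuma_main m r (fun j => lt_trans one_pos (hr j))
    f (asanuma_aux_line_ne_zero f ⟨ε⟩) ε
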